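/- If a piece u₂ of a curve comes within distance δ of a piece u₁ (i.e., there exist p₁ ∈ u₁, p₂ ∈ u₂ with ‖p₁−p₂‖ ≤ δ), l(u₂) ≥ l(u₁), and p_m is the midpoint (in arc length) of u₁, then the arc length of u₂ inside the closed ball B(p_m, (3/2)·l(u₁) + δ) is at least l(u₁). -/
import Mathlib

open Set

/-- First exit time from a closed ball: if a continuous curve on `[a, b]` started at `u a`
reaches distance at least `l > 0` from `u a`, then there is a time `e` where the distance is
exactly `l`. -/
lemma exit_time {X : Type*} [MetricSpace X] {u : ℝ → X} {a b : ℝ}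
    (hcont : ContinuousOn u (Icc a b)) {l : ℝ} (hl : 0 < l)
    (hC : ∃ t ∈ Icc a b, l ≤ dist (u t) (u a)) :
    ∃ e ∈ Icc a b, dist (u e) (u a) = l := by
  obtain ⟨t₁, ht₁, ht₁l⟩ := hC
  have hab : a ≤ b := le_trans ht₁.1 ht₁.2
  set g : ℝ → ℝ := fun t => dist (u t) (u a) with hg
  have hgcont : ContinuousOn g (Icc a b) :=
    fun x hx => (hcont x hx).dist continuousWithinAt_const
  set C : Set ℝ := Icc a b ∩ g ⁻¹' Ici l with hCdef
  have hCclosed : IsClosed C :=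
    hgcont.preimage_isClosed_of_isClosed isClosed_Icc isClosed_Ici
  have hCne : C.Nonempty := ⟨t₁, ht₁, ht₁l⟩
  have hCbdd : BddBelow C := ⟨a, fun x hx => hx.1.1⟩
  set e := sInf C with he
  have heC : e ∈ C := hCclosed.csInf_mem hCne hCbdd
  have heI : e ∈ Icc a b := heC.1
  have hge : l ≤ g e := heC.2
  have hae : a < e := by
    rcases lt_or_eq_of_le heI.1 with h | h
    · exact h
    · exfalso
      have : g e = 0 := by rw [← h]; simp [hg]
      rw [this] at hge; linarith
  -- every point strictly before `e` is strictly inside the ball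
  have hbefore : ∀ t ∈ Ico a e, g t ≤ l := by
    intro t ht
    by_contra h
    push_neg at h
    have : t ∈ C := ⟨⟨ht.1, le_trans ht.2.le heI.2⟩, h.le⟩
    exact absurd (csInf_le hCbdd this) (not_le.2 ht.2)
  -- by continuity, `g e ≤ l`
  have hle : g e ≤ l := by
    have hsub : Ico a e ⊆ Icc a b := fun x hx => ⟨hx.1, le_trans hx.2.le heI.2⟩
    have htends : Filter.Tendsto g (nhdsWithin e (Ico a e)) (nhds (g e)) := by
      have h1 : ContinuousWithinAt g (Icc a b) e := hgcont e heI
      exact h1.mono hsub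
    have hne : (nhdsWithin e (Ico a e)).NeBot := by
      rw [mem_closure_iff_nhdsWithin_neBot.symm ]
      rw [closure_Ico (ne_of_lt hae)]
      exact ⟨hae.le, le_refl e⟩
    exact le_of_tendsto htends (Filter.eventually_of_mem self_mem_nhdsWithin hbefore)
  exact ⟨e, heI, le_antisymm hle hge⟩

/-- If a piece `u₂` comes within distance `δ` of a piece `u₁`, `l(u₂) ≥ l(u₁) = l₁`, and
`p_m = u₁ t_m` is the arc-length midpoint of `u₁`, then the arc length of `u₂` inside the
closed ball `B(p_m, (3/2)·l₁ + δ)` is at least `l₁`. -/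
theorem stmt_18 {d : ℕ} (u₁ u₂ : ℝ → EuclideanSpace ℝ (Fin d)) (δ l₁ : ℝ)
    (hδ : 0 < δ) (hl₁ : 0 < l₁)
    (h₁cont : ContinuousOn u₁ (Icc 0 1)) (h₂cont : ContinuousOn u₂ (Icc 0 1))
    (hlen1 : eVariationOn u₁ (Icc 0 1) = ENNReal.ofReal l₁)
    (hlen2 : ENNReal.ofReal l₁ ≤ eVariationOn u₂ (Icc 0 1))
    (tm : ℝ) (htm : tm ∈ Icc (0:ℝ) 1)
    (hmid : eVariationOn u₁ (Icc 0 tm) = eVariationOn u₁ (Icc tm 1))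
    (hclose : ∃ s ∈ Icc (0:ℝ) 1, ∃ t ∈ Icc (0:ℝ) 1, ‖u₁ s - u₂ t‖ ≤ δ) :
    ENNReal.ofReal l₁ ≤
      eVariationOn u₂
        {t ∈ Icc (0:ℝ) 1 | u₂ t ∈ Metric.closedBall (u₁ tm) (3 / 2 * l₁ + δ)} := by
  obtain ⟨s₀, hs₀, t₀, ht₀, hst⟩ := hclose
  -- the two halves of u₁ each have length l₁/2
  have hsplit : eVariationOn u₁ (Icc 0 tm) + eVariationOn u₁ (Icc tm 1)
      = ENNReal.ofReal l₁ := by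
    have := eVariationOn.Icc_add_Icc u₁ (s := Icc 0 1) htm.1 htm.2 htm
    rw [Set.inter_eq_self_of_subset_right (Icc_subset_Icc le_rfl htm.2),
        Set.inter_eq_self_of_subset_right (Icc_subset_Icc htm.1 le_rfl),
        Set.inter_self] at this
    rw [this, hlen1]
  have hhalf : eVariationOn u₁ (Icc 0 tm) = ENNReal.ofReal (l₁ / 2) := by
    rw [← hmid] at hsplit
    have h2 : eVariationOn u₁ (Icc 0 tm) * 2 = ENNReal.ofReal l₁ := by
      rw [mul_two]; exact hsplit
    have h3 : eVariationOn u₁ (Icc 0 tm) = ENNReal.ofReal l₁ / 2 :=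
      (ENNReal.eq_div_iff two_ne_zero ENNReal.ofNat_ne_top).2 (by rw [two_mul]; exact hsplit)
    rw [h3, ENNReal.ofReal_div_of_pos (by norm_num : (0:ℝ) < 2)]
    norm_num
  -- every point of u₁ is within l₁/2 of u₁ tm
  have hu1 : ∀ s ∈ Icc (0:ℝ) 1, dist (u₁ s) (u₁ tm) ≤ l₁ / 2 := by
    intro s hs
    have key : edist (u₁ s) (u₁ tm) ≤ ENNReal.ofReal (l₁ / 2) := by
      rcases le_total s tm with h | h
      · calc edist (u₁ s) (u₁ tm)
            ≤ eVariationOn u₁ (Icc 0 tm) :=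
              eVariationOn.edist_le u₁ ⟨hs.1, h⟩ ⟨htm.1, le_rfl⟩
          _ = ENNReal.ofReal (l₁ / 2) := hhalf
      · calc edist (u₁ s) (u₁ tm)
            ≤ eVariationOn u₁ (Icc tm 1) :=
              eVariationOn.edist_le u₁ ⟨h, hs.2⟩ ⟨le_rfl, htm.2⟩
          _ = ENNReal.ofReal (l₁ / 2) := hmid ▸ hhalf
    rw [edist_dist] at key
    exact (ENNReal.ofReal_le_ofReal_iff (by linarith)).1 key
  -- u₂ t₀ is within l₁/2 + δ of u₁ tm
  have ht₀m : dist (u₂ t₀) (u₁ tm) ≤ l₁ / 2 + δ := by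
    have h1 : dist (u₂ t₀) (u₁ s₀) ≤ δ := by
      rw [dist_comm, dist_eq_norm]; exact hst
    calc dist (u₂ t₀) (u₁ tm) ≤ dist (u₂ t₀) (u₁ s₀) + dist (u₁ s₀) (u₁ tm) :=
          dist_triangle _ _ _
      _ ≤ δ + l₁ / 2 := add_le_add h1 (hu1 s₀ hs₀)
      _ = l₁ / 2 + δ := by ring
  -- membership in the target set for points close to u₂ t₀
  set S : Set ℝ := {t ∈ Icc (0:ℝ) 1 | u₂ t ∈ Metric.closedBall (u₁ tm) (3 / 2 * l₁ + δ)}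
    with hS
  have hmem : ∀ t ∈ Icc (0:ℝ) 1, dist (u₂ t) (u₂ t₀) ≤ l₁ → t ∈ S := by
    intro t ht hd
    refine ⟨ht, ?_⟩
    rw [Metric.mem_closedBall]
    calc dist (u₂ t) (u₁ tm) ≤ dist (u₂ t) (u₂ t₀) + dist (u₂ t₀) (u₁ tm) :=
          dist_triangle _ _ _
      _ ≤ l₁ + (l₁ / 2 + δ) := add_le_add hd ht₀m
      _ = 3 / 2 * l₁ + δ := by ring
  have ht₀S : t₀ ∈ S := hmem t₀ ht₀ (by simp [hl₁.le])
  by_cases hR : ∃ t ∈ Icc t₀ 1, l₁ ≤ dist (u₂ t) (u₂ t₀)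
  · -- exit on the right
    obtain ⟨e, heI, heq⟩ := exit_time (h₂cont.mono (Icc_subset_Icc ht₀.1 le_rfl)) hl₁ hR
    have heS : e ∈ S := hmem e ⟨le_trans ht₀.1 heI.1, heI.2⟩ heq.le
    calc ENNReal.ofReal l₁ = edist (u₂ e) (u₂ t₀) := by rw [edist_dist, heq]
      _ ≤ eVariationOn u₂ S := eVariationOn.edist_le u₂ heS ht₀S
  · by_cases hL : ∃ t ∈ Icc (0:ℝ) t₀, l₁ ≤ dist (u₂ t) (u₂ t₀)
    · -- exit on the left: reflect time
      have hcont' : ContinuousOn (fun t => u₂ (-t)) (Icc (-t₀) 0) := by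
        apply (h₂cont.mono (Icc_subset_Icc (le_refl 0) ht₀.2)).comp
          (continuousOn_neg)
        intro x hx
        exact ⟨neg_nonneg.2 hx.2, by simpa using neg_le_neg hx.1⟩
      have hC' : ∃ t ∈ Icc (-t₀) (0:ℝ), l₁ ≤ dist (u₂ (-t)) (u₂ (-(-t₀))) := by
        obtain ⟨t, ht, htl⟩ := hL
        exact ⟨-t, ⟨neg_le_neg ht.2, neg_nonpos.2 ht.1⟩, by simpa using htl⟩
      obtain ⟨e, heI, heq⟩ := exit_time (u := fun t => u₂ (-t)) hcont' hl₁ hC'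
      simp only [neg_neg] at heq
      have hneI : -e ∈ Icc (0:ℝ) 1 :=
        ⟨neg_nonneg.2 heI.2, le_trans (neg_le_neg heI.1 |>.trans_eq (neg_neg t₀)) ht₀.2⟩
      have heS : -e ∈ S := hmem (-e) hneI heq.le
      calc ENNReal.ofReal l₁ = edist (u₂ (-e)) (u₂ t₀) := by rw [edist_dist, heq]
        _ ≤ eVariationOn u₂ S := eVariationOn.edist_le u₂ heS ht₀S
    · -- the whole curve stays within distance l₁ of u₂ t₀
      push_neg at hR hL
      have hsub : Icc (0:ℝ) 1 ⊆ S := by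
        intro t ht
        rcases le_total t t₀ with h | h
        · exact hmem t ht (hL t ⟨ht.1, h⟩).le
        · exact hmem t ht (hR t ⟨h, ht.2⟩).le
      exact hlen2.trans (eVariationOn.mono u₂ hsub)
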